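/- Let R = ℤ[s1, s2, s3, s12, s13, s23, s123] be the polynomial ring in seven variables and let I be the ideal generated by the single element rel := s12·s13·s23 − (s12² + s13² + s23² + s12·(s1·s2 + s3·s123) + s13·(s1·s3 + s2·s123) + s23·(s2·s3 + s1·s123) + s1·s2·s3·s123 + s1² + s2² + s3² + s123² − 4). Then the images in R/I of the monomials s1^{k1} s2^{k2} s3^{k3} s12^{k12} s13^{k13} s23^{k23} s123^{k123} with k12·k13·k23 = 0 span R/I as a ℤ-module. -/

import Mathlib

open MvPolynomial

/-- Variables: `X 0 = s1`, `X 1 = s2`, `X 2 = s3`, `X 3 = s12`, `X 4 = s13`, `X 5 = s23`,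
`X 6 = s123`. The Bullock–Przytycki relation for the skein algebra of the four-holed
sphere at `q = 1`. -/
noncomputable def bpRel : MvPolynomial (Fin 7) ℤ :=
  X 3 * X 4 * X 5 -
    (X 3 ^ 2 + X 4 ^ 2 + X 5 ^ 2
      + X 3 * (X 0 * X 1 + X 2 * X 6) + X 4 * (X 0 * X 2 + X 1 * X 6)
      + X 5 * (X 1 * X 2 + X 0 * X 6)
      + X 0 * X 1 * X 2 * X 6 + X 0 ^ 2 + X 1 ^ 2 + X 2 ^ 2 + X 6 ^ 2 - 4)

namespace BPaux

noncomputable def rhs : MvPolynomial (Fin 7) ℤ :=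
  X 3 ^ 2 + X 4 ^ 2 + X 5 ^ 2
      + X 3 * (X 0 * X 1 + X 2 * X 6) + X 4 * (X 0 * X 2 + X 1 * X 6)
      + X 5 * (X 1 * X 2 + X 0 * X 6)
      + X 0 * X 1 * X 2 * X 6 + X 0 ^ 2 + X 1 ^ 2 + X 2 ^ 2 + X 6 ^ 2 - 4

noncomputable def Q : MvPolynomial (Fin 7) ℤ →+* MvPolynomial (Fin 7) ℤ ⧸ Ideal.span {bpRel} :=
  Ideal.Quotient.mk _

def S : Set (MvPolynomial (Fin 7) ℤ ⧸ Ideal.span {bpRel}) :=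
  {y | ∃ k : Fin 7 → ℕ, k 3 * k 4 * k 5 = 0 ∧
      y = Ideal.Quotient.mk (Ideal.span {bpRel}) (∏ i, X i ^ k i)}

def sgl (i : Fin 7) (m : ℕ) : Fin 7 → ℕ := fun j => if j = i then m else 0

lemma prod_sgl (i : Fin 7) (m : ℕ) :
    (∏ j, X j ^ sgl i m j : MvPolynomial (Fin 7) ℤ) = X i ^ m := by
  simp [sgl, pow_ite, Finset.prod_ite_eq']

lemma hQrel : Q (X 3 * X 4 * X 5) = Q rhs := by
  have : X 3 * X 4 * X 5 - rhs ∈ Ideal.span {bpRel} :=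
    Ideal.subset_span (by simp [bpRel, rhs])
  exact Ideal.Quotient.eq.mpr this

lemma prod_mul (e k : Fin 7 → ℕ) :
    (∏ i, X i ^ e i : MvPolynomial (Fin 7) ℤ) * (∏ i, X i ^ k i) = ∏ i, X i ^ (e i + k i) := by
  rw [← Finset.prod_mul_distrib]; simp [pow_add]

lemma base_mem (k : Fin 7 → ℕ) (h : k 3 * k 4 * k 5 = 0) :
    Q (∏ i, X i ^ k i) ∈ Submodule.span ℤ S :=
  Submodule.subset_span ⟨k, h, rfl⟩

lemma key : ∀ n (k : Fin 7 → ℕ), k 3 + k 4 + k 5 ≤ n →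
    Q (∏ i, X i ^ k i) ∈ Submodule.span ℤ S := by
  intro n
  induction n with
  | zero =>
      intro k hk
      have h : k 3 = 0 := by omega
      exact base_mem k (by rw [h, zero_mul, zero_mul])
  | succ n IH =>
      intro k hk
      by_cases h0 : k 3 * k 4 * k 5 = 0
      · exact base_mem k h0
      have h3 : k 3 ≠ 0 := fun h => h0 (by simp [h])
      have h4 : k 4 ≠ 0 := fun h => h0 (by simp [h])
      have h5 : k 5 ≠ 0 := fun h => h0 (by simp [h])
      set k' : Fin 7 → ℕ := fun i => k i - (if i = 3 ∨ i = 4 ∨ i = 5 then 1 else 0) with hk'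
      have e0 : k' 0 = k 0 := by simp [hk']
      have e1 : k' 1 = k 1 := by simp [hk']
      have e2 : k' 2 = k 2 := by simp [hk']
      have e6 : k' 6 = k 6 := by simp [hk']
      have g3 : k' 3 = k 3 - 1 := by simp [hk']
      have g4 : k' 4 = k 4 - 1 := by simp [hk']
      have g5 : k' 5 = k 5 - 1 := by simp [hk']
      have e3 : k 3 = k' 3 + 1 := by rw [g3]; omega
      have e4 : k 4 = k' 4 + 1 := by rw [g4]; omega
      have e5 : k 5 = k' 5 + 1 := by rw [g5]; omega
      have hsplit : (∏ i, X i ^ k i : MvPolynomial (Fin 7) ℤ)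
          = X 3 * X 4 * X 5 * ∏ i, X i ^ k' i := by
        rw [Fin.prod_univ_seven, Fin.prod_univ_seven, e0, e1, e2, e6, e3, e4, e5,
          pow_succ, pow_succ, pow_succ]
        ring
      have hmem : ∀ e : Fin 7 → ℕ, e 3 + e 4 + e 5 ≤ 2 →
          Q ((∏ i, X i ^ e i) * ∏ i, X i ^ k' i) ∈ Submodule.span ℤ S := by
        intro e he
        rw [prod_mul]
        apply IH
        omega
      have hrw : Q (∏ i, X i ^ k i) = Q (rhs * ∏ i, X i ^ k' i) := by
        rw [hsplit, map_mul, hQrel, ← map_mul]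
      rw [hrw]
      set P : MvPolynomial (Fin 7) ℤ := ∏ i, X i ^ k' i with hP
      -- exponent vectors for the 14 monomial terms of rhs
      set E1 := sgl 3 2 with hE1
      set E2 := sgl 4 2 with hE2
      set E3 := sgl 5 2 with hE3
      set E4 : Fin 7 → ℕ := fun j => sgl 3 1 j + (sgl 0 1 j + sgl 1 1 j) with hE4
      set E5 : Fin 7 → ℕ := fun j => sgl 3 1 j + (sgl 2 1 j + sgl 6 1 j) with hE5
      set E6 : Fin 7 → ℕ := fun j => sgl 4 1 j + (sgl 0 1 j + sgl 2 1 j) with hE6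
      set E7 : Fin 7 → ℕ := fun j => sgl 4 1 j + (sgl 1 1 j + sgl 6 1 j) with hE7
      set E8 : Fin 7 → ℕ := fun j => sgl 5 1 j + (sgl 1 1 j + sgl 2 1 j) with hE8
      set E9 : Fin 7 → ℕ := fun j => sgl 5 1 j + (sgl 0 1 j + sgl 6 1 j) with hE9
      set E10 : Fin 7 → ℕ := fun j => sgl 0 1 j + sgl 1 1 j + sgl 2 1 j + sgl 6 1 j with hE10
      set E11 := sgl 0 2 with hE11
      set E12 := sgl 1 2 with hE12
      set E13 := sgl 2 2 with hE13
      set E14 := sgl 6 2 with hE14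
      have pe : ∀ (a b c : Fin 7),
          (∏ j, X j ^ (sgl a 1 j + (sgl b 1 j + sgl c 1 j)) : MvPolynomial (Fin 7) ℤ)
            = X a * (X b * X c) := by
        intro a b c
        simp [pow_add, Finset.prod_mul_distrib, prod_sgl]
      have pe10 : (∏ j, X j ^ E10 j : MvPolynomial (Fin 7) ℤ) = X 0 * X 1 * X 2 * X 6 := by
        simp [hE10, pow_add, Finset.prod_mul_distrib, prod_sgl]
      have hexp : rhs * P =
          (∏ j, X j ^ E1 j) * P + (∏ j, X j ^ E2 j) * P + (∏ j, X j ^ E3 j) * P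
          + (∏ j, X j ^ E4 j) * P + (∏ j, X j ^ E5 j) * P + (∏ j, X j ^ E6 j) * P
          + (∏ j, X j ^ E7 j) * P + (∏ j, X j ^ E8 j) * P + (∏ j, X j ^ E9 j) * P
          + (∏ j, X j ^ E10 j) * P + (∏ j, X j ^ E11 j) * P + (∏ j, X j ^ E12 j) * P
          + (∏ j, X j ^ E13 j) * P + (∏ j, X j ^ E14 j) * P - (4 : ℤ) • P := by
        rw [hE1, hE2, hE3, hE11, hE12, hE13, hE14, prod_sgl, prod_sgl, prod_sgl, prod_sgl,
          prod_sgl, prod_sgl, prod_sgl, pe 3 0 1, pe 3 2 6, pe 4 0 2, pe 4 1 6, pe 5 1 2,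
          pe 5 0 6, pe10, zsmul_eq_mul]
        simp only [rhs]
        push_cast
        ring
      rw [hexp]
      simp only [map_add, map_sub, map_zsmul]
      have sgl_le : ∀ e : Fin 7 → ℕ, e 3 + e 4 + e 5 ≤ 2 → True := fun _ _ => trivial
      refine Submodule.sub_mem _ ?_ ?_
      · refine Submodule.add_mem _ (Submodule.add_mem _ (Submodule.add_mem _ (Submodule.add_mem _
          (Submodule.add_mem _ (Submodule.add_mem _ (Submodule.add_mem _ (Submodule.add_mem _
          (Submodule.add_mem _ (Submodule.add_mem _ (Submodule.add_mem _ (Submodule.add_mem _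
          (Submodule.add_mem _ ?_ ?_) ?_) ?_) ?_) ?_) ?_) ?_) ?_) ?_) ?_) ?_) ?_) ?_
        · exact hmem E1 (by simp [hE1, sgl])
        · exact hmem E2 (by simp [hE2, sgl])
        · exact hmem E3 (by simp [hE3, sgl])
        · exact hmem E4 (by simp [hE4, sgl])
        · exact hmem E5 (by simp [hE5, sgl])
        · exact hmem E6 (by simp [hE6, sgl])
        · exact hmem E7 (by simp [hE7, sgl])
        · exact hmem E8 (by simp [hE8, sgl])
        · exact hmem E9 (by simp [hE9, sgl])
        · exact hmem E10 (by simp [hE10, sgl])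
        · exact hmem E11 (by simp [hE11, sgl])
        · exact hmem E12 (by simp [hE12, sgl])
        · exact hmem E13 (by simp [hE13, sgl])
        · exact hmem E14 (by simp [hE14, sgl])
      · refine Submodule.smul_mem _ (4 : ℤ) ?_
        have := hmem (fun _ => 0) (by norm_num)
        simpa using this

end BPaux

theorem stmt_9 :
    Submodule.span ℤ
      {y : MvPolynomial (Fin 7) ℤ ⧸ Ideal.span {bpRel} |
        ∃ k : Fin 7 → ℕ, k 3 * k 4 * k 5 = 0 ∧
          y = Ideal.Quotient.mk (Ideal.span {bpRel}) (∏ i, X i ^ k i)} = ⊤ := by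
  rw [eq_top_iff]
  rintro y -
  obtain ⟨p, rfl⟩ := Ideal.Quotient.mk_surjective y
  induction p using MvPolynomial.induction_on' with
  | monomial d a =>
      have hm : (monomial d a : MvPolynomial (Fin 7) ℤ) = a • ∏ i, X i ^ d i := by
        rw [monomial_eq, Finsupp.prod_fintype _ _ fun i => pow_zero _, ← smul_eq_C_mul]
      rw [hm, map_zsmul]
      exact Submodule.smul_mem _ a (BPaux.key (d 3 + d 4 + d 5) (⇑d) le_rfl)
  | add p q hp hq =>
      rw [map_add]
      exact Submodule.add_mem _ hp hq
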